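/- (Equivalence in the hitting-set reduction.) Let (V, S = {S₁,…,S_m}, k) be a δ-Hitting Set instance. In the constructed instance with t = δ+1, d = 1, s = k: there exists a hitting set C ⊆ V with |C| ≤ k (i.e., C ∩ S_j ≠ ∅ for all j) if and only if there exists a blocker set B ⊆ U^V with |B| ≤ k, i.e., a set B of at most k users from U^V such that no T ⊆ U∖B with |T| ≤ δ+1 has N(T) ⊇ R. -/

import Mathlib

/-- Users of the hitting-set reduction: `inl i` is `u^V_i`, `inr j` is `u^S_j`. -/
abbrev UsrHS (n m : ℕ) := Fin n ⊕ Fin m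

/-- Resources of the hitting-set reduction: `inl Q` is `r^V_Q` for a
`(δ-1)`-element subset `Q` of `U^V`; `inr (inl (j, x))` is `p^j_x`;
`inr (inr ())` is `r^*`. -/
abbrev ResHS (n m δ : ℕ) :=
  {Q : Finset (Fin n) // Q.card = δ - 1} ⊕ ((Fin m × Fin δ) ⊕ Unit)

/-- The authorization policy of the hitting-set reduction, where `S j x` is the
`x`-th element of the set `S_j`. -/
def authHS {n m δ : ℕ} (S : Fin m → Fin δ → Fin n) :
    UsrHS n m → ResHS n m δ → Prop
  | .inl i, .inl Q => i ∉ Q.val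
  | .inl i, .inr (.inl (j, x)) => S j x = i
  | .inl _, .inr (.inr _) => False
  | .inr _, .inl _ => False
  | .inr j, .inr (.inl (j', _)) => j' ≠ j
  | .inr _, .inr (.inr _) => True


/-- Equivalence in the hitting-set reduction: a hitting set of size at most `k`
exists iff the constructed instance has a blocker set `B ⊆ U^V` of size at most
`k`, i.e. no team of size at most `δ+1` avoiding `B` covers all resources. -/
theorem hittingSet_reduction_correct {n m δ k : ℕ} (hδ : 2 ≤ δ)
    (S : Fin m → Fin δ → Fin n) (hinj : ∀ j, Function.Injective (S j)) :
    (∃ C : Finset (Fin n), C.card ≤ k ∧ ∀ j : Fin m, ∃ x : Fin δ, S j x ∈ C)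
    ↔ (∃ B : Finset (UsrHS n m), B.card ≤ k ∧
        (∀ u ∈ B, ∃ i : Fin n, u = Sum.inl i) ∧
        ¬ ∃ T : Finset (UsrHS n m), Disjoint T B ∧ T.card ≤ δ + 1 ∧
            ∀ r : ResHS n m δ, ∃ u ∈ T, authHS S u r) := by
  constructor
  · rintro ⟨C, hCk, hC⟩
    refine ⟨C.image Sum.inl, (Finset.card_image_le).trans hCk, ?_, ?_⟩
    · intro u hu
      obtain ⟨i, _, rfl⟩ := Finset.mem_image.mp hu
      exact ⟨i, rfl⟩
    · rintro ⟨T, hdisj, hcard, hcov⟩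
      obtain ⟨u, huT, hauth⟩ := hcov (Sum.inr (Sum.inr ()))
      obtain j₀ | j₀ := u
      · exact hauth
      · have hδn : δ ≤ n := by
          simpa using Fintype.card_le_of_injective _ (hinj j₀)
        by_cases hTS : ∃ j₁, Sum.inr j₁ ∈ T ∧ j₁ ≠ j₀
        · obtain ⟨j₁, hj₁T, hj₁ne⟩ := hTS
          have h2 : 2 ≤ T.toRight.card := by
            have : ({j₀, j₁} : Finset (Fin m)) ⊆ T.toRight := by
              intro a ha
              simp only [Finset.mem_insert, Finset.mem_singleton] at ha
              rcases ha with rfl | rfl <;> simp [Finset.mem_toRight, huT, hj₁T]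
            have hc : ({j₀, j₁} : Finset (Fin m)).card = 2 := by
              rw [Finset.card_insert_of_notMem (by simpa using hj₁ne.symm),
                Finset.card_singleton]
            calc 2 = ({j₀, j₁} : Finset (Fin m)).card := hc.symm
              _ ≤ T.toRight.card := Finset.card_le_card this
          have hTV : T.toLeft.card ≤ δ - 1 := by
            have := Finset.card_toLeft_add_card_toRight (u := T)
            omega
          have hun : δ - 1 ≤ (Finset.univ : Finset (Fin n)).card := by
            simp only [Finset.card_univ, Fintype.card_fin]; omega
          obtain ⟨Q, hTVQ, -, hQcard⟩ :=
            Finset.exists_subsuperset_card_eq (T.toLeft.subset_univ) hTV hun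
          obtain ⟨v, hvT, hvauth⟩ := hcov (Sum.inl ⟨Q, hQcard⟩)
          obtain i | j := v
          · exact hvauth (hTVQ (Finset.mem_toLeft.mpr hvT))
          · exact hvauth
        · push_neg at hTS
          obtain ⟨x, hx⟩ := hC j₀
          obtain ⟨v, hvT, hvauth⟩ := hcov (Sum.inr (Sum.inl (j₀, x)))
          obtain i | j := v
          · have : (Sum.inl i : UsrHS n m) ∈ C.image Sum.inl := by
              simp only [authHS] at hvauth
              exact Finset.mem_image_of_mem _ (hvauth ▸ hx)
            exact Finset.disjoint_left.mp hdisj hvT this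
          · exact hvauth (hTS j hvT).symm
  · rintro ⟨B, hBk, hBV, hblock⟩
    classical
    refine ⟨Finset.univ.filter (fun i => Sum.inl i ∈ B), ?_, ?_⟩
    · refine le_trans (Finset.card_le_card_of_injOn Sum.inl ?_ ?_) hBk
      · intro i hi; exact (Finset.mem_filter.mp hi).2
      · intro a _ b _ h; exact Sum.inl.inj h
    · intro j₀
      by_contra hmiss
      push_neg at hmiss
      simp only [Finset.mem_filter, Finset.mem_univ, true_and] at hmiss
      apply hblock
      refine ⟨insert (Sum.inr j₀) (Finset.univ.image (fun x => Sum.inl (S j₀ x))),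
        ?_, ?_, ?_⟩
      · rw [Finset.disjoint_left]
        intro u hu huB
        rcases Finset.mem_insert.mp hu with rfl | hu
        · obtain ⟨i, hi⟩ := hBV _ huB
          cases hi
        · obtain ⟨x, -, rfl⟩ := Finset.mem_image.mp hu
          exact hmiss x huB
      · have h2 : (Finset.univ.image (fun x : Fin δ =>
            (Sum.inl (S j₀ x) : UsrHS n m))).card ≤ δ := by
          apply le_trans Finset.card_image_le
          simp
        have h1 := Finset.card_insert_le (Sum.inr j₀ : UsrHS n m)
          (Finset.univ.image (fun x : Fin δ => (Sum.inl (S j₀ x) : UsrHS n m)))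
        omega
      · rintro (⟨Q, hQ⟩ | ⟨⟨j, x⟩ | ⟨⟩⟩)
        · have hns : ¬ (Finset.univ.image (S j₀) ⊆ Q) := by
            intro hsub
            have h1 := Finset.card_le_card hsub
            rw [Finset.card_image_of_injective _ (hinj j₀), Finset.card_univ,
              Fintype.card_fin, hQ] at h1
            omega
          obtain ⟨i, hi, hiQ⟩ := Finset.not_subset.mp hns
          obtain ⟨x, -, rfl⟩ := Finset.mem_image.mp hi
          exact ⟨Sum.inl (S j₀ x), Finset.mem_insert_of_mem
            (Finset.mem_image_of_mem _ (Finset.mem_univ x)), hiQ⟩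
        · by_cases hj : j = j₀
          · subst hj
            exact ⟨Sum.inl (S j x), Finset.mem_insert_of_mem
              (Finset.mem_image_of_mem _ (Finset.mem_univ x)), rfl⟩
          · exact ⟨Sum.inr j₀, Finset.mem_insert_self _ _, hj⟩
        · exact ⟨Sum.inr j₀, Finset.mem_insert_self _ _, trivial⟩
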